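/- Let d ≥ 3, t ∈ (−1,1), t ≠ −1/(d−1). Define A₁,…,A_d ∈ M_d(ℂ) by (A_m)_{mm} = t, (A_m)_{jk} = 0 when exactly one of j,k equals m, (A_m)_{jj} = (3−d)/(d−1) for j ≠ m, and (A_m)_{jk} = 2/(d−1) for j ≠ k with j,k ≠ m. Then each A_m is self-adjoint (A_m* = A_m) and the family of d² matrices {A_m A_n}_{m,n=1}^d is linearly independent over ℂ. -/
import Mathlib

set_option maxHeartbeats 1600000


open Matrix

noncomputable section

/-- The key-example matrices: `(A_m)_{mm} = t`, `(A_m)_{jk} = 0` when exactly one of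
`j,k` equals `m`, `(A_m)_{jj} = (3−d)/(d−1)` for `j ≠ m`, and `(A_m)_{jk} = 2/(d−1)` for
`j ≠ k` with `j,k ≠ m`. -/
def keyMatrix (d : ℕ) (t : ℝ) (m : Fin d) : Matrix (Fin d) (Fin d) ℂ :=
  Matrix.of fun j k =>
    if j = m ∧ k = m then (t : ℂ)
    else if j = m ∨ k = m then 0
    else if j = k then (((3 - (d : ℝ)) / ((d : ℝ) - 1) : ℝ) : ℂ)
    else (((2 : ℝ) / ((d : ℝ) - 1) : ℝ) : ℂ)

open Finset

namespace KeyEx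

variable {d : ℕ}

def dd (x y : Fin d) : ℂ := if x = y then 1 else 0

lemma dd_self (x : Fin d) : dd x x = 1 := if_pos rfl
lemma dd_ne {x y : Fin d} (h : x ≠ y) : dd x y = 0 := if_neg h

lemma sum_dd_L (p : Fin d) : ∑ x, dd p x = 1 := by simp [dd]
lemma sum_dd_R (p : Fin d) : ∑ x, dd x p = 1 := by simp [dd]
lemma sum_dd_mul_L (p : Fin d) (v : Fin d → ℂ) : ∑ x, dd p x * v x = v p := by
  simp [dd, ite_mul]
lemma sum_dd_mul_R (p : Fin d) (v : Fin d → ℂ) : ∑ x, dd x p * v x = v p := by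
  simp [dd, ite_mul]
lemma sum_dd_dd_LR (p q : Fin d) : ∑ x, dd p x * dd x q = dd p q := by
  rcases eq_or_ne p q with h | h
  · simp [dd, ite_mul, h]
  · simp [dd, ite_mul, h, h.symm]
lemma sum_dd_dd_RR (p q : Fin d) : ∑ x, dd x p * dd x q = dd p q := by
  rcases eq_or_ne p q with h | h
  · simp [dd, ite_mul, h]
  · simp [dd, ite_mul, h, h.symm]
lemma sum_dd_T_RR (p q : Fin d) (v : Fin d → ℂ) :
    ∑ x, dd x p * (dd x q * v x) = dd p q * v p := by
  simp only [dd, ite_mul, one_mul, zero_mul, Finset.sum_ite_eq, mem_univ, if_true]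
  by_cases h : p = q <;> simp [h, eq_comm]
lemma sum_dd_T_LR (p q : Fin d) (v : Fin d → ℂ) :
    ∑ x, dd p x * (dd x q * v x) = dd p q * v p := by
  simp only [dd, ite_mul, one_mul, zero_mul, Finset.sum_ite_eq', mem_univ, if_true]
  by_cases h : p = q <;> simp [h]
lemma dd_comm (x y : Fin d) : dd x y = dd y x := by
  rcases eq_or_ne x y with h | h
  · simp [dd, h]
  · simp [dd, h, h.symm]
lemma sum_const' (B : ℂ) : ∑ _x : Fin d, B = (d : ℂ) * B := by
  simp [Finset.sum_const, Finset.card_univ, mul_comm]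


def cK (d : ℕ) : ℂ := ((2 / ((d : ℝ) - 1) : ℝ) : ℂ)
def aK (d : ℕ) (t : ℝ) : ℂ := (t : ℂ) + 1 + cK d

lemma hd1R {d : ℕ} (hd : 3 ≤ d) : ((d : ℝ) - 1) ≠ 0 := by
  have : (3:ℝ) ≤ (d:ℝ) := by exact_mod_cast hd
  linarith

lemma key_apply {d : ℕ} (hd : 3 ≤ d) (t : ℝ) (m j k : Fin d) :
    keyMatrix d t m j k =
      cK d - cK d * dd j m - cK d * dd k m + aK d t * (dd j m * dd k m) - dd j k := by
  have h1 : ((d : ℝ) - 1) ≠ 0 := hd1R hd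
  have h1C : ((d : ℂ) - 1) ≠ 0 := by
    have h2 := Complex.ofReal_ne_zero.mpr h1
    push_cast at h2
    exact h2
  rcases eq_or_ne j m with hjm | hjm
  · rcases eq_or_ne k m with hkm | hkm
    · subst hjm; subst hkm
      simp [keyMatrix, dd, cK, aK]
    · subst hjm
      have hjk : j ≠ k := fun h => hkm h.symm
      simp [keyMatrix, dd, hkm, hjk, Ne.symm hkm]
  · rcases eq_or_ne k m with hkm | hkm
    · subst hkm
      have hjk : j ≠ k := hjm
      simp [keyMatrix, dd, hjm, hjk]
    · rcases eq_or_ne j k with hjk | hjk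
      · subst hjk
        simp only [keyMatrix, Matrix.of_apply, dd, cK, aK, hjm, hkm, if_neg,
          and_self, if_pos, or_self, if_true, if_false]
        push_cast
        field_simp
        ring
      · simp only [keyMatrix, Matrix.of_apply, dd, cK, aK, hjm, hkm, hjk,
          and_self, or_self, if_false, ite_false]
        push_cast
        ring

lemma prod_apply {d : ℕ} (hd : 3 ≤ d) (t : ℝ) (m n j k : Fin d) :
    (keyMatrix d t m * keyMatrix d t n) j k =
      (d : ℂ) * ((cK d - cK d * dd j m) * (cK d - cK d * dd k n))
      + (cK d - cK d * dd j m) * (aK d t * dd k n - cK d)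
      + (aK d t * dd j m - cK d) * (cK d - cK d * dd k n)
      + (aK d t * dd j m - cK d) * ((aK d t * dd k n - cK d) * dd m n)
      - (cK d - cK d * dd j m) - (cK d - cK d * dd k n)
      - (aK d t * dd j m - cK d) * dd m k
      - (aK d t * dd k n - cK d) * dd j n
      + dd j k := by
  rw [Matrix.mul_apply]
  have hpt : ∀ l, keyMatrix d t m j l * keyMatrix d t n l k =
      ((cK d - cK d * dd j m) * (cK d - cK d * dd k n))
      + ((cK d - cK d * dd j m) * (aK d t * dd k n - cK d)) * dd l n
      + (-(cK d - cK d * dd j m)) * dd l k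
      + ((aK d t * dd j m - cK d) * (cK d - cK d * dd k n)) * dd l m
      + ((aK d t * dd j m - cK d) * (aK d t * dd k n - cK d)) * (dd l m * dd l n)
      + (-(aK d t * dd j m - cK d)) * (dd l m * dd l k)
      + (-(cK d - cK d * dd k n)) * dd j l
      + (-(aK d t * dd k n - cK d)) * (dd j l * dd l n)
      + dd j l * dd l k := by
    intro l
    rw [key_apply hd t m j l, key_apply hd t n l k]
    ring
  rw [Finset.sum_congr rfl fun l _ => hpt l]
  simp only [Finset.sum_add_distrib, ← Finset.mul_sum, sum_const', sum_dd_L, sum_dd_R,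
    sum_dd_dd_RR, sum_dd_dd_LR]
  ring

lemma core {d : ℕ} (hd : 3 ≤ d) (t : ℝ) (ht : t ∈ Set.Ioo (-1 : ℝ) 1)
    (ht' : t ≠ -1 / ((d : ℝ) - 1)) (g : Fin d × Fin d → ℂ)
    (hg : ∑ p : Fin d × Fin d, g p • (keyMatrix d t p.1 * keyMatrix d t p.2) = 0) :
    ∀ p, g p = 0 := by
  obtain ⟨htl, htr⟩ := ht
  have hd3 : (3:ℝ) ≤ (d:ℝ) := by exact_mod_cast hd
  have hdm1 : (0:ℝ) < (d:ℝ) - 1 := by linarith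
  set cR : ℝ := 2 / ((d:ℝ) - 1) with hcRdef
  have hck : cK d = ((cR : ℝ) : ℂ) := rfl
  have ha : aK d t = (t:ℂ) + 1 + cK d := rfl
  have hcRpos : 0 < cR := div_pos (by norm_num) hdm1
  have hcRle : cR ≤ 1 := by rw [hcRdef, div_le_one hdm1]; linarith
  have hcR2 : cR * (d:ℝ) = cR + 2 := by rw [hcRdef]; field_simp; ring
  have hc : cK d * (d:ℂ) = cK d + 2 := by rw [hck]; exact_mod_cast hcR2
  have htcR : 2*t + cR ≠ 0 := by
    rw [hcRdef]
    intro h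
    apply ht'
    field_simp at h ⊢
    linarith
  have hcC : cK d ≠ 0 := by rw [hck]; exact Complex.ofReal_ne_zero.mpr hcRpos.ne'
  have h2cC : (2:ℂ) - cK d ≠ 0 := by
    rw [hck, show (2:ℂ) - ((cR:ℝ):ℂ) = ((2 - cR : ℝ):ℂ) by push_cast; ring]
    exact Complex.ofReal_ne_zero.mpr (by linarith)
  have htcC : 2*(t:ℂ) + cK d ≠ 0 := by
    rw [hck, show 2*(t:ℂ) + ((cR:ℝ):ℂ) = ((2*t + cR : ℝ):ℂ) by push_cast; ring]
    exact Complex.ofReal_ne_zero.mpr htcR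
  have hdtC : (d:ℂ) - 1 + (t:ℂ)^2 ≠ 0 := by
    rw [show (d:ℂ) - 1 + (t:ℂ)^2 = (((d:ℝ) - 1 + t^2 : ℝ):ℂ) by push_cast; ring]
    exact Complex.ofReal_ne_zero.mpr (by nlinarith [sq_nonneg t])
  have ht1C : (t:ℂ) - 1 ≠ 0 := by
    rw [show (t:ℂ) - 1 = ((t - 1 : ℝ):ℂ) by push_cast; ring]
    exact Complex.ofReal_ne_zero.mpr (by linarith)
  have ht1C' : (t:ℂ) + 1 ≠ 0 := by
    rw [show (t:ℂ) + 1 = ((t + 1 : ℝ):ℂ) by push_cast; ring]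
    exact Complex.ofReal_ne_zero.mpr (by linarith)
  have haC : aK d t ≠ 0 := by
    rw [ha, hck, show (t:ℂ) + 1 + ((cR:ℝ):ℂ) = ((t + 1 + cR : ℝ):ℂ) by push_cast; ring]
    exact Complex.ofReal_ne_zero.mpr (by linarith)
  have hdetR : (3*cR - 2)*t + 2*cR^2 - cR - 2 < 0 := by
    rcases le_or_gt (3*cR) 2 with h | h
    · nlinarith [mul_nonpos_of_nonpos_of_nonneg (show 3*cR - 2 ≤ 0 by linarith)
        (show (0:ℝ) ≤ t + 1 by linarith), mul_pos hcRpos (show (0:ℝ) < 2 - cR by linarith)]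
    · nlinarith [mul_lt_mul_of_pos_left htr (show (0:ℝ) < 3*cR - 2 by linarith),
        mul_nonneg (show (0:ℝ) ≤ 1 - cR by linarith) (show (0:ℝ) ≤ cR + 2 by linarith)]
  have hdetC : (3*cK d - 2)*(t:ℂ) + 2*cK d^2 - cK d - 2 ≠ 0 := by
    rw [hck, show (3*((cR:ℝ):ℂ) - 2)*(t:ℂ) + 2*((cR:ℝ):ℂ)^2 - ((cR:ℝ):ℂ) - 2
        = (((3*cR - 2)*t + 2*cR^2 - cR - 2 : ℝ):ℂ) by push_cast; ring]
    exact Complex.ofReal_ne_zero.mpr hdetR.ne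
  set G : Fin d → Fin d → ℂ := fun m' n' => g (m', n') with hGdef
  -- entry equations
  have h0 : ∀ j k : Fin d,
      ∑ m', ∑ n', G m' n' * ((keyMatrix d t m' * keyMatrix d t n') j k) = 0 := by
    intro j k
    have h1 : (∑ p : Fin d × Fin d, g p • (keyMatrix d t p.1 * keyMatrix d t p.2)) j k
        = (0 : Matrix (Fin d) (Fin d) ℂ) j k := by rw [hg]
    rw [Matrix.sum_apply] at h1
    simp only [Matrix.smul_apply, smul_eq_mul, Matrix.zero_apply] at h1
    rw [Fintype.sum_prod_type] at h1
    exact h1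
  -- master equation
  have hE : ∀ j k : Fin d,
      (((d:ℂ))*(cK d)^2 - (2:ℂ)*(cK d)^2 - (2:ℂ)*(cK d) + dd j k)*(∑ x, ∑ y, G x y)
      + (-(((d:ℂ))*(cK d)^2) + (cK d)^2 + (aK d t)*(cK d) + (cK d))*(∑ y, G j y)
      + (cK d)*(∑ y, G k y)
      + (-(aK d t))*(dd j k*(∑ y, G j y))
      + (-(((d:ℂ))*(cK d)^2) + (cK d)^2 + (aK d t)*(cK d) + (cK d))*(∑ x, G x k)
      + (((d:ℂ))*(cK d)^2 - (2:ℂ)*((aK d t)*(cK d)))*G j k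
      + (cK d)^2*(∑ x, G x x)
      + (-((aK d t)*(cK d)))*G j j
      + (cK d)*(∑ x, G x j)
      + (aK d t)^2*(dd j k*G j j)
      + (-((aK d t)*(cK d)))*G k k
      + (-(aK d t))*(dd j k*(∑ x, G x j)) = 0 := by
    intro j k
    have hinner : ∀ m' : Fin d,
        ∑ n', G m' n' * ((keyMatrix d t m' * keyMatrix d t n') j k) =
        ((d:ℂ)*(cK d*(cK d - cK d*dd j m')) - cK d*(cK d - cK d*dd j m')
          + cK d*(aK d t*dd j m' - cK d) - (cK d - cK d*dd j m') - cK d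
          - (aK d t*dd j m' - cK d)*dd m' k + dd j k) * (∑ y, G m' y)
        + (-((d:ℂ)*(cK d*(cK d - cK d*dd j m'))) + aK d t*(cK d - cK d*dd j m')
          - cK d*(aK d t*dd j m' - cK d) + cK d) * G m' k
        + (-(cK d*(aK d t*dd j m' - cK d))) * G m' m'
        + cK d * G m' j
        + (aK d t*(aK d t*dd j m' - cK d)) * (dd k m' * G m' m')
        + (-(aK d t)) * (dd k j * G m' j) := by
      intro m'
      have hpt : ∀ n', G m' n' * ((keyMatrix d t m' * keyMatrix d t n') j k) =
          ((d:ℂ)*(cK d*(cK d - cK d*dd j m')) - cK d*(cK d - cK d*dd j m')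
            + cK d*(aK d t*dd j m' - cK d) - (cK d - cK d*dd j m') - cK d
            - (aK d t*dd j m' - cK d)*dd m' k + dd j k) * G m' n'
          + (-((d:ℂ)*(cK d*(cK d - cK d*dd j m'))) + aK d t*(cK d - cK d*dd j m')
            - cK d*(aK d t*dd j m' - cK d) + cK d) * (dd k n' * G m' n')
          + (-(cK d*(aK d t*dd j m' - cK d))) * (dd m' n' * G m' n')
          + cK d * (dd j n' * G m' n')
          + (aK d t*(aK d t*dd j m' - cK d)) * (dd m' n' * (dd k n' * G m' n'))
          + (-(aK d t)) * (dd j n' * (dd k n' * G m' n')) := by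
        intro n'
        rw [prod_apply hd t m' n' j k]
        ring
      rw [Finset.sum_congr rfl fun n' _ => hpt n']
      simp only [Finset.sum_add_distrib, ← Finset.mul_sum, sum_dd_mul_L]
      try ring
    have h2 := h0 j k
    rw [Finset.sum_congr rfl fun m' _ => hinner m'] at h2
    have hpt2 : ∀ m' : Fin d,
        ((d:ℂ)*(cK d*(cK d - cK d*dd j m')) - cK d*(cK d - cK d*dd j m')
          + cK d*(aK d t*dd j m' - cK d) - (cK d - cK d*dd j m') - cK d
          - (aK d t*dd j m' - cK d)*dd m' k + dd j k) * (∑ y, G m' y)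
        + (-((d:ℂ)*(cK d*(cK d - cK d*dd j m'))) + aK d t*(cK d - cK d*dd j m')
          - cK d*(aK d t*dd j m' - cK d) + cK d) * G m' k
        + (-(cK d*(aK d t*dd j m' - cK d))) * G m' m'
        + cK d * G m' j
        + (aK d t*(aK d t*dd j m' - cK d)) * (dd k m' * G m' m')
        + (-(aK d t)) * (dd k j * G m' j)
        =
        ((d:ℂ)*cK d^2 - (2:ℂ)*cK d^2 - (2:ℂ)*cK d + dd j k) * (∑ y, G m' y)
        + (-((d:ℂ)*cK d^2) + cK d^2 + aK d t*cK d + cK d) * (dd j m' * (∑ y, G m' y))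
        + cK d * (dd m' k * (∑ y, G m' y))
        + (-(aK d t)) * (dd j m' * (dd m' k * (∑ y, G m' y)))
        + (-((d:ℂ)*cK d^2) + aK d t*cK d + cK d^2 + cK d) * G m' k
        + ((d:ℂ)*cK d^2 - (2:ℂ)*(aK d t*cK d)) * (dd j m' * G m' k)
        + cK d^2 * G m' m'
        + (-(aK d t*cK d)) * (dd j m' * G m' m')
        + aK d t^2 * (dd j m' * (dd k m' * G m' m'))
        + (-(aK d t*cK d)) * (dd k m' * G m' m')
        + cK d * G m' j
        + ((-(aK d t)) * dd k j) * G m' j := fun m' => by ring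
    rw [Finset.sum_congr rfl fun m' _ => hpt2 m'] at h2
    simp only [Finset.sum_add_distrib, ← Finset.mul_sum, sum_dd_mul_L, sum_dd_mul_R] at h2
    simp only [dd_comm k j] at h2
    linear_combination h2

  -- row-sum equations
  have hS2 : ∀ j : Fin d, ((1:ℂ)*(∑ x, ∑ y, G x y) + (-1:ℂ)*aK d t*(∑ x, G x j) + (-1:ℂ)*aK d t*(∑ y, G j y) + (1:ℂ)*aK d t^2*G j j + (2:ℂ)*cK d*(∑ x, ∑ y, G x y) + (-2:ℂ)*cK d*aK d t*(∑ y, G j y) + (-1:ℂ)*cK d*aK d t*(∑ x, G x x) + (1:ℂ)*cK d*aK d t*(∑ x, ∑ y, G x y) + (1:ℂ)*cK d*(d:ℂ)*(∑ x, G x j) + (1:ℂ)*cK d*(d:ℂ)*(∑ y, G j y) + (-2:ℂ)*cK d*(d:ℂ)*(∑ x, ∑ y, G x y) + (-1:ℂ)*cK d*(d:ℂ)*aK d t*G j j + (1:ℂ)*cK d*(d:ℂ)*aK d t*(∑ y, G j y) + (1:ℂ)*cK d^2*(∑ x, ∑ y, G x y) + (2:ℂ)*cK d^2*(d:ℂ)*(∑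 y, G j y) + (1:ℂ)*cK d^2*(d:ℂ)*(∑ x, G x x) + (-3:ℂ)*cK d^2*(d:ℂ)*(∑ x, ∑ y, G x y) + (-1:ℂ)*cK d^2*(d:ℂ)^2*(∑ y, G j y) + (1:ℂ)*cK d^2*(d:ℂ)^2*(∑ x, ∑ y, G x y)) = 0 := by
    intro j
    have hsum : ∑ k, ((((d:ℂ))*(cK d)^2 - (2:ℂ)*(cK d)^2 - (2:ℂ)*(cK d) + dd j k)*(∑ x, ∑ y, G x y)
      + (-(((d:ℂ))*(cK d)^2) + (cK d)^2 + (aK d t)*(cK d) + (cK d))*(∑ y, G j y)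
      + (cK d)*(∑ y, G k y)
      + (-(aK d t))*(dd j k*(∑ y, G j y))
      + (-(((d:ℂ))*(cK d)^2) + (cK d)^2 + (aK d t)*(cK d) + (cK d))*(∑ x, G x k)
      + (((d:ℂ))*(cK d)^2 - (2:ℂ)*((aK d t)*(cK d)))*G j k
      + (cK d)^2*(∑ x, G x x)
      + (-((aK d t)*(cK d)))*G j j
      + (cK d)*(∑ x, G x j)
      + (aK d t)^2*(dd j k*G j j)
      + (-((aK d t)*(cK d)))*G k k
      + (-(aK d t))*(dd j k*(∑ x, G x j))) = 0 :=
      Finset.sum_eq_zero fun k _ => hE j k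
    have harr : ∀ k : Fin d, ((((d:ℂ))*(cK d)^2 - (2:ℂ)*(cK d)^2 - (2:ℂ)*(cK d) + dd j k)*(∑ x, ∑ y, G x y)
      + (-(((d:ℂ))*(cK d)^2) + (cK d)^2 + (aK d t)*(cK d) + (cK d))*(∑ y, G j y)
      + (cK d)*(∑ y, G k y)
      + (-(aK d t))*(dd j k*(∑ y, G j y))
      + (-(((d:ℂ))*(cK d)^2) + (cK d)^2 + (aK d t)*(cK d) + (cK d))*(∑ x, G x k)
      + (((d:ℂ))*(cK d)^2 - (2:ℂ)*((aK d t)*(cK d)))*G j k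
      + (cK d)^2*(∑ x, G x x)
      + (-((aK d t)*(cK d)))*G j j
      + (cK d)*(∑ x, G x j)
      + (aK d t)^2*(dd j k*G j j)
      + (-((aK d t)*(cK d)))*G k k
      + (-(aK d t))*(dd j k*(∑ x, G x j))) =
        (((d:ℂ))*(cK d)^2*(∑ x, ∑ y, G x y) - (2:ℂ)*(cK d)^2*(∑ x, ∑ y, G x y)
          - (2:ℂ)*(cK d)*(∑ x, ∑ y, G x y)
          + (-(((d:ℂ))*(cK d)^2) + (cK d)^2 + (aK d t)*(cK d) + (cK d))*(∑ y, G j y)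
          + (cK d)^2*(∑ x, G x x) + (-((aK d t)*(cK d)))*G j j + (cK d)*(∑ x, G x j))
        + (-(((d:ℂ))*(cK d)^2) + (cK d)^2 + (aK d t)*(cK d) + (cK d))*(∑ x, G x k)
        + (-((aK d t)*(cK d)))*G k k
        + (((d:ℂ))*(cK d)^2 - (2:ℂ)*((aK d t)*(cK d)))*G j k
        + (cK d)*(∑ y, G k y)
        + ((∑ x, ∑ y, G x y) + (aK d t)^2*G j j - (aK d t)*(∑ y, G j y) - (aK d t)*(∑ x, G x j))*dd j k := fun k => by ring
    rw [Finset.sum_congr rfl fun k _ => harr k] at hsum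
    simp only [Finset.sum_add_distrib, ← Finset.mul_sum, sum_dd_L, sum_const', Finset.sum_const, Finset.card_univ, Fintype.card_fin, nsmul_eq_mul] at hsum
    rw [show (∑ k : Fin d, ∑ x, G x k) = ∑ x, ∑ y, G x y from Finset.sum_comm] at hsum
    linear_combination hsum
  -- column-sum equations
  have hS3 : ∀ k : Fin d, ((1:ℂ)*(∑ x, ∑ y, G x y) + (-1:ℂ)*aK d t*(∑ x, G x k) + (-1:ℂ)*aK d t*(∑ y, G k y) + (1:ℂ)*aK d t^2*G k k + (2:ℂ)*cK d*(∑ x, ∑ y, G x y) + (-2:ℂ)*cK d*aK d t*(∑ x, G x k) + (-1:ℂ)*cK d*aK d t*(∑ x, G x x) + (1:ℂ)*cK d*aK d t*(∑ x, ∑ y, G x y) + (1:ℂ)*cK d*(d:ℂ)*(∑ x, G x k) + (1:ℂ)*cK d*(d:ℂ)*(∑ y, G k y) + (-2:ℂ)*cK d*(d:ℂ)*(∑ x, ∑ y, G x y) + (-1:ℂ)*cK d*(d:ℂ)*aK d t*G k k + (1:ℂ)*cK d*(d:ℂ)*aK d t*(∑ x, G x k) + (1:ℂ)*cK d^2*(∑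 x, ∑ y, G x y) + (2:ℂ)*cK d^2*(d:ℂ)*(∑ x, G x k) + (1:ℂ)*cK d^2*(d:ℂ)*(∑ x, G x x) + (-3:ℂ)*cK d^2*(d:ℂ)*(∑ x, ∑ y, G x y) + (-1:ℂ)*cK d^2*(d:ℂ)^2*(∑ x, G x k) + (1:ℂ)*cK d^2*(d:ℂ)^2*(∑ x, ∑ y, G x y)) = 0 := by
    intro k
    have hsum : ∑ j, ((((d:ℂ))*(cK d)^2 - (2:ℂ)*(cK d)^2 - (2:ℂ)*(cK d) + dd j k)*(∑ x, ∑ y, G x y)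
      + (-(((d:ℂ))*(cK d)^2) + (cK d)^2 + (aK d t)*(cK d) + (cK d))*(∑ y, G j y)
      + (cK d)*(∑ y, G k y)
      + (-(aK d t))*(dd j k*(∑ y, G j y))
      + (-(((d:ℂ))*(cK d)^2) + (cK d)^2 + (aK d t)*(cK d) + (cK d))*(∑ x, G x k)
      + (((d:ℂ))*(cK d)^2 - (2:ℂ)*((aK d t)*(cK d)))*G j k
      + (cK d)^2*(∑ x, G x x)
      + (-((aK d t)*(cK d)))*G j j
      + (cK d)*(∑ x, G x j)
      + (aK d t)^2*(dd j k*G j j)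
      + (-((aK d t)*(cK d)))*G k k
      + (-(aK d t))*(dd j k*(∑ x, G x j))) = 0 :=
      Finset.sum_eq_zero fun j _ => hE j k
    have harr : ∀ j : Fin d, ((((d:ℂ))*(cK d)^2 - (2:ℂ)*(cK d)^2 - (2:ℂ)*(cK d) + dd j k)*(∑ x, ∑ y, G x y)
      + (-(((d:ℂ))*(cK d)^2) + (cK d)^2 + (aK d t)*(cK d) + (cK d))*(∑ y, G j y)
      + (cK d)*(∑ y, G k y)
      + (-(aK d t))*(dd j k*(∑ y, G j y))
      + (-(((d:ℂ))*(cK d)^2) + (cK d)^2 + (aK d t)*(cK d) + (cK d))*(∑ x, G x k)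
      + (((d:ℂ))*(cK d)^2 - (2:ℂ)*((aK d t)*(cK d)))*G j k
      + (cK d)^2*(∑ x, G x x)
      + (-((aK d t)*(cK d)))*G j j
      + (cK d)*(∑ x, G x j)
      + (aK d t)^2*(dd j k*G j j)
      + (-((aK d t)*(cK d)))*G k k
      + (-(aK d t))*(dd j k*(∑ x, G x j))) =
        (((d:ℂ))*(cK d)^2*(∑ x, ∑ y, G x y) - (2:ℂ)*(cK d)^2*(∑ x, ∑ y, G x y)
          - (2:ℂ)*(cK d)*(∑ x, ∑ y, G x y)
          + (-(((d:ℂ))*(cK d)^2) + (cK d)^2 + (aK d t)*(cK d) + (cK d))*(∑ x, G x k)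
          + (cK d)^2*(∑ x, G x x) + (-((aK d t)*(cK d)))*G k k + (cK d)*(∑ y, G k y))
        + (-(((d:ℂ))*(cK d)^2) + (cK d)^2 + (aK d t)*(cK d) + (cK d))*(∑ y, G j y)
        + (-((aK d t)*(cK d)))*G j j
        + (((d:ℂ))*(cK d)^2 - (2:ℂ)*((aK d t)*(cK d)))*G j k
        + (cK d)*(∑ x, G x j)
        + (∑ x, ∑ y, G x y)*dd j k
        + (aK d t)^2*(dd j k*G j j)
        + (-(aK d t))*(dd j k*(∑ y, G j y))
        + (-(aK d t))*(dd j k*(∑ x, G x j)) := fun j => by ring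
    rw [Finset.sum_congr rfl fun j _ => harr j] at hsum
    simp only [Finset.sum_add_distrib, ← Finset.mul_sum, sum_dd_R, sum_dd_mul_R,
      sum_const', Finset.sum_const, Finset.card_univ, Fintype.card_fin, nsmul_eq_mul] at hsum
    rw [show (∑ j : Fin d, ∑ x, G x j) = ∑ x, ∑ y, G x y from Finset.sum_comm] at hsum
    linear_combination hsum
  -- diagonal equations
  have hSd : ∀ j : Fin d, ((1:ℂ)*(∑ x, ∑ y, G x y) + (-1:ℂ)*aK d t*(∑ x, G x j) + (-1:ℂ)*aK d t*(∑ y, G j y) + (1:ℂ)*aK d t^2*G j j + (2:ℂ)*cK d*(∑ x, G x j) + (2:ℂ)*cK d*(∑ y, G j y) + (-2:ℂ)*cK d*(∑ x, ∑ y, G x y) + (-4:ℂ)*cK d*aK d t*G j j + (1:ℂ)*cK d*aK d t*(∑ x, G x j) + (1:ℂ)*cK d*aK d t*(∑ y, G j y) + (1:ℂ)*cK d^2*(∑ x, G x j) + (1:ℂ)*cK d^2*(∑ y, G j y) + (1:ℂ)*cK d^2*(∑ x, G x x) + (-2:ℂ)*cK d^2*(∑ x, ∑ y, G x y) + (1:ℂ)*cK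 d^2*(d:ℂ)*G j j + (-1:ℂ)*cK d^2*(d:ℂ)*(∑ x, G x j) + (-1:ℂ)*cK d^2*(d:ℂ)*(∑ y, G j y) + (1:ℂ)*cK d^2*(d:ℂ)*(∑ x, ∑ y, G x y)) = 0 := by
    intro j
    linear_combination (hE j j) - ((∑ x, ∑ y, G x y) + (aK d t)^2*G j j - (aK d t)*(∑ y, G j y) - (aK d t)*(∑ x, G x j))*(dd_self j)
  -- total sum
  have hS1 : ((-2:ℂ)*aK d t*(∑ x, ∑ y, G x y) + (1:ℂ)*aK d t^2*(∑ x, G x x) + (1:ℂ)*(d:ℂ)*(∑ x, ∑ y, G x y) + (-2:ℂ)*cK d*aK d t*(∑ x, ∑ y, G x y) + (4:ℂ)*cK d*(d:ℂ)*(∑ x, ∑ y, G x y) + (-2:ℂ)*cK d*(d:ℂ)*aK d t*(∑ x, G x x) + (2:ℂ)*cK d*(d:ℂ)*aK d t*(∑ x, ∑ y, G x y) + (-2:ℂ)*cK d*(d:ℂ)^2*(∑ x, ∑ y, G x y) + (3:ℂ)*cK d^2*(d:ℂ)*(∑ x, ∑ y, G x y) + (1:ℂ)*cK d^2*(d:ℂ)^2*(∑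 x, G x x) + (-4:ℂ)*cK d^2*(d:ℂ)^2*(∑ x, ∑ y, G x y) + (1:ℂ)*cK d^2*(d:ℂ)^3*(∑ x, ∑ y, G x y)) = 0 := by
    have hsum : ∑ j, (((1:ℂ)*(∑ x, ∑ y, G x y) + (-1:ℂ)*aK d t*(∑ x, G x j) + (-1:ℂ)*aK d t*(∑ y, G j y) + (1:ℂ)*aK d t^2*G j j + (2:ℂ)*cK d*(∑ x, ∑ y, G x y) + (-2:ℂ)*cK d*aK d t*(∑ y, G j y) + (-1:ℂ)*cK d*aK d t*(∑ x, G x x) + (1:ℂ)*cK d*aK d t*(∑ x, ∑ y, G x y) + (1:ℂ)*cK d*(d:ℂ)*(∑ x, G x j) + (1:ℂ)*cK d*(d:ℂ)*(∑ y, G j y) + (-2:ℂ)*cK d*(d:ℂ)*(∑ x, ∑ y, G x y) + (-1:ℂ)*cK d*(d:ℂ)*aK d t*G j j + (1:ℂ)*cK d*(d:ℂ)*aK d t*(∑ y, G j y) + (1:ℂ)*cK d^2*(∑ x, ∑ y, G x y) + (2:ℂ)*cK d^2*(d:ℂ)*(∑ y, G j y) + (1:ℂ)*cK d^2*(d:ℂ)*(∑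 x, G x x) + (-3:ℂ)*cK d^2*(d:ℂ)*(∑ x, ∑ y, G x y) + (-1:ℂ)*cK d^2*(d:ℂ)^2*(∑ y, G j y) + (1:ℂ)*cK d^2*(d:ℂ)^2*(∑ x, ∑ y, G x y))) = 0 := Finset.sum_eq_zero fun j _ => hS2 j
    have harr : ∀ j : Fin d, (((1:ℂ)*(∑ x, ∑ y, G x y) + (-1:ℂ)*aK d t*(∑ x, G x j) + (-1:ℂ)*aK d t*(∑ y, G j y) + (1:ℂ)*aK d t^2*G j j + (2:ℂ)*cK d*(∑ x, ∑ y, G x y) + (-2:ℂ)*cK d*aK d t*(∑ y, G j y) + (-1:ℂ)*cK d*aK d t*(∑ x, G x x) + (1:ℂ)*cK d*aK d t*(∑ x, ∑ y, G x y) + (1:ℂ)*cK d*(d:ℂ)*(∑ x, G x j) + (1:ℂ)*cK d*(d:ℂ)*(∑ y, G j y) + (-2:ℂ)*cK d*(d:ℂ)*(∑ x, ∑ y, G x y) + (-1:ℂ)*cK d*(d:ℂ)*aK d t*G j j + (1:ℂ)*cK d*(d:ℂ)*aK d t*(∑ y, G j y) + (1:ℂ)*cK d^2*(∑ x, ∑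 y, G x y) + (2:ℂ)*cK d^2*(d:ℂ)*(∑ y, G j y) + (1:ℂ)*cK d^2*(d:ℂ)*(∑ x, G x x) + (-3:ℂ)*cK d^2*(d:ℂ)*(∑ x, ∑ y, G x y) + (-1:ℂ)*cK d^2*(d:ℂ)^2*(∑ y, G j y) + (1:ℂ)*cK d^2*(d:ℂ)^2*(∑ x, ∑ y, G x y))) =
        (((d:ℂ))*(((d:ℂ))*(cK d)^2 - (2:ℂ)*(cK d)^2 - (2:ℂ)*(cK d))*(∑ x, ∑ y, G x y)
          + (-(((d:ℂ))*(cK d)^2) + (cK d)^2 + (aK d t)*(cK d) + (cK d))*(∑ x, ∑ y, G x y)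
          + ((d:ℂ))*(cK d)^2*(∑ x, G x x) + (-((aK d t)*(cK d)))*(∑ x, G x x)
          + (cK d)*(∑ x, ∑ y, G x y) + (∑ x, ∑ y, G x y))
        + (((d:ℂ))*(-(((d:ℂ))*(cK d)^2) + (cK d)^2 + (aK d t)*(cK d) + (cK d))
            + (((d:ℂ))*(cK d)^2 - (2:ℂ)*((aK d t)*(cK d))) + (-(aK d t)))*(∑ y, G j y)
        + (((d:ℂ))*(cK d) + (-(aK d t)))*(∑ x, G x j)
        + ((-(((d:ℂ))*((aK d t)*(cK d)))) + (aK d t)^2)*G j j := fun j => by ring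
    rw [Finset.sum_congr rfl fun j _ => harr j] at hsum
    simp only [Finset.sum_add_distrib, ← Finset.mul_sum, sum_const', Finset.sum_const, Finset.card_univ, Fintype.card_fin, nsmul_eq_mul] at hsum
    rw [show (∑ j : Fin d, ∑ x, G x j) = ∑ x, ∑ y, G x y from Finset.sum_comm] at hsum
    linear_combination hsum
  -- trace sum
  have hS5 : ((-2:ℂ)*aK d t*(∑ x, ∑ y, G x y) + (1:ℂ)*aK d t^2*(∑ x, G x x) + (1:ℂ)*(d:ℂ)*(∑ x, ∑ y, G x y) + (4:ℂ)*cK d*(∑ x, ∑ y, G x y) + (-4:ℂ)*cK d*aK d t*(∑ x, G x x) + (2:ℂ)*cK d*aK d t*(∑ x, ∑ y, G x y) + (-2:ℂ)*cK d*(d:ℂ)*(∑ x, ∑ y, G x y) + (2:ℂ)*cK d^2*(∑ x, ∑ y, G x y) + (2:ℂ)*cK d^2*(d:ℂ)*(∑ x, G x x) + (-4:ℂ)*cK d^2*(d:ℂ)*(∑ x, ∑ y, G x y) + (1:ℂ)*cK d^2*(d:ℂ)^2*(∑ x, ∑ y, G x y)) = 0 := by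
    have hsum : ∑ j, (((1:ℂ)*(∑ x, ∑ y, G x y) + (-1:ℂ)*aK d t*(∑ x, G x j) + (-1:ℂ)*aK d t*(∑ y, G j y) + (1:ℂ)*aK d t^2*G j j + (2:ℂ)*cK d*(∑ x, G x j) + (2:ℂ)*cK d*(∑ y, G j y) + (-2:ℂ)*cK d*(∑ x, ∑ y, G x y) + (-4:ℂ)*cK d*aK d t*G j j + (1:ℂ)*cK d*aK d t*(∑ x, G x j) + (1:ℂ)*cK d*aK d t*(∑ y, G j y) + (1:ℂ)*cK d^2*(∑ x, G x j) + (1:ℂ)*cK d^2*(∑ y, G j y) + (1:ℂ)*cK d^2*(∑ x, G x x) + (-2:ℂ)*cK d^2*(∑ x, ∑ y, G x y) + (1:ℂ)*cK d^2*(d:ℂ)*G j j + (-1:ℂ)*cK d^2*(d:ℂ)*(∑ x, G x j) + (-1:ℂ)*cK d^2*(d:ℂ)*(∑ y, G j y) + (1:ℂ)*cK d^2*(d:ℂ)*(∑ x, ∑ y, G x y))) = 0 := Finset.sum_eq_zero fun j _ => hSd j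
    have harr : ∀ j : Fin d, (((1:ℂ)*(∑ x, ∑ y, G x y) + (-1:ℂ)*aK d t*(∑ x, G x j) + (-1:ℂ)*aK d t*(∑ y, G j y) + (1:ℂ)*aK d t^2*G j j + (2:ℂ)*cK d*(∑ x, G x j) + (2:ℂ)*cK d*(∑ y, G j y) + (-2:ℂ)*cK d*(∑ x, ∑ y, G x y) + (-4:ℂ)*cK d*aK d t*G j j + (1:ℂ)*cK d*aK d t*(∑ x, G x j) + (1:ℂ)*cK d*aK d t*(∑ y, G j y) + (1:ℂ)*cK d^2*(∑ x, G x j) + (1:ℂ)*cK d^2*(∑ y, G j y) + (1:ℂ)*cK d^2*(∑ x, G x x) + (-2:ℂ)*cK d^2*(∑ x, ∑ y, G x y) + (1:ℂ)*cK d^2*(d:ℂ)*G j j + (-1:ℂ)*cK d^2*(d:ℂ)*(∑ x, G x j) + (-1:ℂ)*cK d^2*(d:ℂ)*(∑ y, G j y) + (1:ℂ)*cK d^2*(d:ℂ)*(∑ x, ∑ y, G x y))) =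
        ((((d:ℂ))*(cK d)^2 - (2:ℂ)*(cK d)^2 - (2:ℂ)*(cK d))*(∑ x, ∑ y, G x y)
          + (cK d)^2*(∑ x, G x x) + (∑ x, ∑ y, G x y))
        + ((-(((d:ℂ))*(cK d)^2) + (cK d)^2 + (aK d t)*(cK d) + (cK d)) + (cK d) + (-(aK d t)))*(∑ y, G j y)
        + ((-(((d:ℂ))*(cK d)^2) + (cK d)^2 + (aK d t)*(cK d) + (cK d)) + (cK d) + (-(aK d t)))*(∑ x, G x j)
        + ((((d:ℂ))*(cK d)^2 - (2:ℂ)*((aK d t)*(cK d))) + (-((aK d t)*(cK d))) + (-((aK d t)*(cK d)))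
            + (aK d t)^2)*G j j := fun j => by ring
    rw [Finset.sum_congr rfl fun j _ => harr j] at hsum
    simp only [Finset.sum_add_distrib, ← Finset.mul_sum, sum_const', Finset.sum_const, Finset.card_univ, Fintype.card_fin, nsmul_eq_mul] at hsum
    rw [show (∑ j : Fin d, ∑ x, G x j) = ∑ x, ∑ y, G x y from Finset.sum_comm] at hsum
    linear_combination hsum

  -- Step 1: T = D
  have hTD : (∑ x, ∑ y, G x y) = (∑ x, G x x) := by
    have hs : (cK d^3*(((2:ℂ) - cK d)*((2:ℂ)*(t:ℂ) + cK d)))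
        * ((∑ x, ∑ y, G x y) - (∑ x, G x x)) = 0 := by
      linear_combination (cK d^3)*hS1 - (cK d^3)*hS5 - (((2:ℂ)*cK d^3*(∑ x, G x x) + (-2:ℂ)*cK d^3*(∑ x, ∑ y, G x y) + (-2:ℂ)*cK d^3*aK d t*(∑ x, G x x) + (2:ℂ)*cK d^3*aK d t*(∑ x, ∑ y, G x y) + (-1:ℂ)*cK d^4*(∑ x, G x x) + (3:ℂ)*cK d^4*(∑ x, ∑ y, G x y) + (1:ℂ)*cK d^4*(d:ℂ)*(∑ x, G x x) + (-4:ℂ)*cK d^4*(d:ℂ)*(∑ x, ∑ y, G x y) + (1:ℂ)*cK d^4*(d:ℂ)^2*(∑ x, ∑ y, G x y)))*hc - (((-4:ℂ)*cK d^3*(∑ x, G x x) + (4:ℂ)*cK d^3*(∑ x, ∑ y, G x y) + (2:ℂ)*cK d^4*(∑ x, G x x) + (-2:ℂ)*cK d^4*(∑ x, ∑ y, G x y)))*ha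
    have hne : cK d^3*(((2:ℂ) - cK d)*((2:ℂ)*(t:ℂ) + cK d)) ≠ 0 :=
      mul_ne_zero (pow_ne_zero _ hcC) (mul_ne_zero h2cC htcC)
    have h9 := (mul_eq_zero.mp hs).resolve_left hne
    exact sub_eq_zero.mp h9
  have hT : (∑ x, ∑ y, G x y) = 0 := by
    have hs : (cK d^3*((d:ℂ) - 1 + (t:ℂ)^2)) * (∑ x, ∑ y, G x y) = 0 := by
      linear_combination (cK d^3)*hS1 + (cK d^3*((t:ℂ)-1)^2)*hTD - (((2:ℂ)*cK d^3*(∑ x, G x x) + (-2:ℂ)*cK d^3*(∑ x, ∑ y, G x y) + (-2:ℂ)*cK d^3*aK d t*(∑ x, G x x) + (2:ℂ)*cK d^3*aK d t*(∑ x, ∑ y, G x y) + (1:ℂ)*cK d^4*(∑ x, G x x) + (1:ℂ)*cK d^4*(d:ℂ)*(∑ x, G x x) + (-3:ℂ)*cK d^4*(d:ℂ)*(∑ x, ∑ y, G x y) + (1:ℂ)*cK d^4*(d:ℂ)^2*(∑ x, ∑ y, G x y)))*hc - (((-3:ℂ)*cK d^3*(∑ x, G x x) + (2:ℂ)*cK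 d^3*(∑ x, ∑ y, G x y) + (1:ℂ)*cK d^3*aK d t*(∑ x, G x x) + (-1:ℂ)*cK d^4*(∑ x, G x x) + (1:ℂ)*(t:ℂ)*cK d^3*(∑ x, G x x)))*ha
    exact (mul_eq_zero.mp hs).resolve_left (mul_ne_zero (pow_ne_zero _ hcC) hdtC)
  have hD : (∑ x, G x x) = 0 := hTD.symm.trans hT
  -- Step 3: K j = R j
  have hKR : ∀ j : Fin d, (∑ x, G x j) = (∑ y, G j y) := by
    intro j
    have hs : (cK d^2*(((t:ℂ) - 1)*((2:ℂ) - cK d)))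
        * ((∑ y, G j y) - (∑ x, G x j)) = 0 := by
      linear_combination (cK d^2)*(hS2 j) - (cK d^2)*(hS3 j) - (((2:ℂ)*cK d^2*(∑ x, G x j) + (-2:ℂ)*cK d^2*(∑ y, G j y) + (-1:ℂ)*cK d^2*aK d t*(∑ x, G x j) + (1:ℂ)*cK d^2*aK d t*(∑ y, G j y) + (-1:ℂ)*cK d^3*(∑ x, G x j) + (1:ℂ)*cK d^3*(∑ y, G j y) + (1:ℂ)*cK d^3*(d:ℂ)*(∑ x, G x j) + (-1:ℂ)*cK d^3*(d:ℂ)*(∑ y, G j y)))*hc - (((-2:ℂ)*cK d^2*(∑ x, G x j) + (2:ℂ)*cK d^2*(∑ y, G j y) + (1:ℂ)*cK d^3*(∑ x, G x j) + (-1:ℂ)*cK d^3*(∑ y, G j y)))*ha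
    have h9 := (mul_eq_zero.mp hs).resolve_left
      (mul_ne_zero (pow_ne_zero _ hcC) (mul_ne_zero ht1C h2cC))
    exact (sub_eq_zero.mp h9).symm
  -- Step 4: a * G j j = c * R j
  have hGrel : ∀ j : Fin d, aK d t * G j j = cK d * (∑ y, G j y) := by
    intro j
    have hs : (cK d^4*((t:ℂ) - 1)) * (aK d t * G j j - cK d * (∑ y, G j y)) = 0 := by
      linear_combination (cK d^4)*(hS2 j) - (cK d^2*(((1:ℂ)*cK d^2 + (-1:ℂ)*cK d^3 + (1:ℂ)*(t:ℂ)*cK d^3)))*hT - (cK d^2*(((1:ℂ)*cK d^3 + (-1:ℂ)*(t:ℂ)*cK d^3)))*hD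
        - (cK d^2*(((1:ℂ)*cK d^2 + (-1:ℂ)*(t:ℂ)*cK d^2)))*(hKR j) - (((1:ℂ)*cK d^4*(∑ x, G x j) + (-1:ℂ)*cK d^4*(∑ y, G j y) + (-1:ℂ)*cK d^4*aK d t*G j j + (1:ℂ)*cK d^4*aK d t*(∑ y, G j y) + (1:ℂ)*cK d^5*(∑ y, G j y) + (1:ℂ)*cK d^5*(∑ x, G x x) + (-2:ℂ)*cK d^5*(∑ x, ∑ y, G x y) + (-1:ℂ)*cK d^5*(d:ℂ)*(∑ y, G j y) + (1:ℂ)*cK d^5*(d:ℂ)*(∑ x, ∑ y, G x y)))*hc - (((-1:ℂ)*cK d^4*(∑ x, G x j) + (1:ℂ)*cK d^4*(∑ y, G j y) + (1:ℂ)*cK d^4*aK d t*G j j + (-1:ℂ)*cK d^5*(∑ y, G j y) + (-1:ℂ)*cK d^5*(∑ x, G x x) + (1:ℂ)*cK d^5*(∑ x, ∑ y, G x y)))*ha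
    have h9 := (mul_eq_zero.mp hs).resolve_left (mul_ne_zero (pow_ne_zero _ hcC) ht1C)
    exact sub_eq_zero.mp h9
  -- Step 5: R j = 0
  have hRz : ∀ j : Fin d, (∑ y, G j y) = 0 := by
    intro j
    have hs : (cK d^2*(((t:ℂ) + 1)*(((3:ℂ)*cK d - 2)*(t:ℂ) + (2:ℂ)*cK d^2 - cK d - 2)))
        * (∑ y, G j y) = 0 := by
      linear_combination (cK d^2*((t:ℂ) + 1 + cK d))*(hSd j) - (cK d*(((1:ℂ)*cK d + (-2:ℂ)*cK d^3 + (2:ℂ)*(t:ℂ)*cK d + (-2:ℂ)*(t:ℂ)*cK d^2 + (1:ℂ)*(t:ℂ)^2*cK d)))*(hGrel j)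
        - (cK d*(((1:ℂ)*cK d + (1:ℂ)*cK d^2 + (-1:ℂ)*cK d^3 + (-1:ℂ)*cK d^4 + (1:ℂ)*(t:ℂ)*cK d + (-1:ℂ)*(t:ℂ)*cK d^3)))*hT - (cK d*(((1:ℂ)*cK d^3 + (1:ℂ)*cK d^4 + (1:ℂ)*(t:ℂ)*cK d^3)))*hD - (cK d*(((-1:ℂ)*cK d + (-1:ℂ)*cK d^2 + (1:ℂ)*cK d^3 + (1:ℂ)*cK d^4 + (-2:ℂ)*(t:ℂ)*cK d + (2:ℂ)*(t:ℂ)*cK d^3 + (-1:ℂ)*(t:ℂ)^2*cK d + (1:ℂ)*(t:ℂ)^2*cK d^2)))*(hKR j) - (((1:ℂ)*cK d^3*G j j + (-1:ℂ)*cK d^3*(∑ x, G x j) + (-1:ℂ)*cK d^3*(∑ y, G j y) + (1:ℂ)*cK d^3*(∑ x, ∑ y, G x y) + (1:ℂ)*cK d^4*G j j + (-1:ℂ)*cK d^4*(∑ x, G x j) + (-1:ℂ)*cK d^4*(∑ y, G j y) + (1:ℂ)*cK d^4*(∑ x, ∑ y, G x y) + (1:ℂ)*(t:ℂ)*cK d^3*G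 j j + (-1:ℂ)*(t:ℂ)*cK d^3*(∑ x, G x j) + (-1:ℂ)*(t:ℂ)*cK d^3*(∑ y, G j y) + (1:ℂ)*(t:ℂ)*cK d^3*(∑ x, ∑ y, G x y)))*hc - (((-1:ℂ)*cK d^2*(∑ x, G x j) + (-1:ℂ)*cK d^2*(∑ y, G j y) + (1:ℂ)*cK d^2*aK d t*G j j + (-2:ℂ)*cK d^3*G j j + (1:ℂ)*cK d^3*aK d t*G j j + (-1:ℂ)*cK d^4*G j j + (1:ℂ)*cK d^4*(∑ x, G x j) + (1:ℂ)*cK d^4*(∑ y, G j y) + (-1:ℂ)*(t:ℂ)*cK d^2*(∑ x, G x j) + (-1:ℂ)*(t:ℂ)*cK d^2*(∑ y, G j y) + (1:ℂ)*(t:ℂ)*cK d^2*aK d t*G j j + (1:ℂ)*(t:ℂ)*cK d^3*(∑ x, G x j) + (1:ℂ)*(t:ℂ)*cK d^3*(∑ y, G j y)))*ha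
    exact (mul_eq_zero.mp hs).resolve_left
      (mul_ne_zero (pow_ne_zero _ hcC) (mul_ne_zero ht1C' hdetC))
  have hKz : ∀ j : Fin d, (∑ x, G x j) = 0 := fun j => (hKR j).trans (hRz j)
  have hGz : ∀ j : Fin d, G j j = 0 := by
    intro j
    have h1 := hGrel j
    rw [hRz j, mul_zero] at h1
    exact (mul_eq_zero.mp h1).resolve_left haC
  -- Step 6: off-diagonal
  intro p
  rcases p with ⟨j, k⟩
  rcases eq_or_ne j k with rfl | hjk
  · exact hGz j
  · have hoff : ((1:ℂ)*cK d*(∑ x, G x k) + (1:ℂ)*cK d*(∑ y, G k y) + (1:ℂ)*cK d*(∑ x, G x j) + (1:ℂ)*cK d*(∑ y, G j y) + (-2:ℂ)*cK d*(∑ x, ∑ y, G x y) + (-2:ℂ)*cK d*aK d t*G j k + (-1:ℂ)*cK d*aK d t*G k k + (1:ℂ)*cK d*aK d t*(∑ x, G x k) + (-1:ℂ)*cK d*aK d t*G j j + (1:ℂ)*cK d*aK d t*(∑ y, G j y) + (1:ℂ)*cK d^2*(∑ x, G x k) + (1:ℂ)*cK d^2*(∑ y, G j y) + (1:ℂ)*cK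 d^2*(∑ x, G x x) + (-2:ℂ)*cK d^2*(∑ x, ∑ y, G x y) + (1:ℂ)*cK d^2*(d:ℂ)*G j k + (-1:ℂ)*cK d^2*(d:ℂ)*(∑ x, G x k) + (-1:ℂ)*cK d^2*(d:ℂ)*(∑ y, G j y) + (1:ℂ)*cK d^2*(d:ℂ)*(∑ x, ∑ y, G x y)) = 0 := by
      linear_combination (hE j k)
        - ((∑ x, ∑ y, G x y) + (aK d t)^2*G j j - (aK d t)*(∑ y, G j y)
            - (aK d t)*(∑ x, G x j))*(dd_ne hjk)
    have hs : (cK d^3*((2:ℂ)*(t:ℂ) + cK d)) * G j k = 0 := by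
      linear_combination (-(cK d^2))*hoff + (cK d*(((-2:ℂ)*cK d^2 + (-2:ℂ)*cK d^3 + (1:ℂ)*cK d^3*(d:ℂ))))*hT + (cK d*(((1:ℂ)*cK d^2 + (1:ℂ)*cK d^2*aK d t + (1:ℂ)*cK d^3 + (-1:ℂ)*cK d^3*(d:ℂ))))*(hRz j)
        + (cK d*(((1:ℂ)*cK d^2 + (1:ℂ)*cK d^2*aK d t + (1:ℂ)*cK d^3 + (-1:ℂ)*cK d^3*(d:ℂ))))*(hKz k) + (cK d*(((1:ℂ)*cK d^3)))*hD - (cK d*(((1:ℂ)*cK d^2*aK d t)))*(hGz j)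
        - (cK d*(((1:ℂ)*cK d^2*aK d t)))*(hGz k) + (cK d*(((1:ℂ)*cK d^2)))*(hRz k) + (cK d*(((1:ℂ)*cK d^2)))*(hKz j)
        + (((1:ℂ)*cK d^3*G j k))*hc + (((-2:ℂ)*cK d^3*G j k))*ha
    exact (mul_eq_zero.mp hs).resolve_left (mul_ne_zero (pow_ne_zero _ hcC) htcC)

end KeyEx

open KeyEx

/-- For `d ≥ 3`, `t ∈ (−1,1)`, `t ≠ −1/(d−1)`: each `A_m` is self-adjoint and the family
of `d²` matrices `{A_m A_n}` is linearly independent over `ℂ`. -/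
theorem keyMatrix_selfAdjoint_and_products_linearIndependent (d : ℕ) (hd : 3 ≤ d)
    (t : ℝ) (ht : t ∈ Set.Ioo (-1 : ℝ) 1) (ht' : t ≠ -1 / ((d : ℝ) - 1)) :
    (∀ m, (keyMatrix d t m)ᴴ = keyMatrix d t m) ∧
    LinearIndependent ℂ
      (fun p : Fin d × Fin d => keyMatrix d t p.1 * keyMatrix d t p.2) := by
  constructor
  · intro m
    ext j k
    rw [Matrix.conjTranspose_apply, key_apply hd t m k j, key_apply hd t m j k]
    have hsd : ∀ x y : Fin d, star (dd x y) = dd x y := by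
      intro x y
      rcases eq_or_ne x y with h | h <;> simp [dd, h]
    have hsc : star (cK d) = cK d := by
      simp [cK, Complex.star_def, Complex.conj_ofReal]
    have hsa : star (aK d t) = aK d t := by
      simp [aK, cK, Complex.star_def, map_add, Complex.conj_ofReal]
    simp only [star_sub, star_add, StarMul.star_mul, hsd, hsc, hsa]
    rw [dd_comm k j]
    ring
  · rw [Fintype.linearIndependent_iff]
    intro g hg
    exact core hd t ht ht' g hg


end
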